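/- Let (Ω, 𝓕, ℙ) be a probability space and {E_{n,k}} (1 ≤ k ≤ 2n) a family of events such that E_{n₁,k} ⊆ E_{n₂,k} for n₁ ≥ n₂. Suppose there are constants C > 0 and a sequence σ_n with σ_{n₁} ≤ σ_{n₂} for n₁ ≥ n₂, a function s(n) ≤ C(ln n)² such that: (GM1) for any 0 < k₁ < ... < k_r ≤ n with all gaps k_{j+1} - k_j ≥ s(n) (taking k₀ = 0), C^{-1}σ_n^r ≤ ℙ(⋂_j E_{n,k_j}) ≤ Cσ_n^r, and (GM2) if exactly m < r gaps are ≥ s(n), then ℙ(⋂_j E_{n,k_j}) ≤ Cσ_n^m (ln n)^{-100r}. If Σ_{j≥1} 2^{rj} σ_{2^j}^r < ∞, then ℙ(H_r) = 0, where H_r is the set of ω lying in at least r of the events E_{n,1},...,E_{n,n} for infinitely many n. -/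

import Mathlib

set_option maxHeartbeats 1000000

section
set_option maxHeartbeats 1000000
open Finset
namespace BC2

/-- enumeration of a finset of naturals with `0` prepended. -/
def kf (S : Finset ℕ) (i : ℕ) : ℕ :=
  if i = 0 then 0 else (S.sort (· ≤ ·)).getD (i - 1) 0

lemma kf_zero (S : Finset ℕ) : kf S 0 = 0 := rfl

variable {S S' : Finset ℕ} {r : ℕ}

lemma kf_mem (hc : S.card = r) {i : ℕ} (h1 : 1 ≤ i) (h2 : i ≤ r) : kf S i ∈ S := by
  have hlen : (S.sort (· ≤ ·)).length = r := by rw [Finset.length_sort, hc]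
  have hlt : i - 1 < (S.sort (· ≤ ·)).length := by omega
  rw [kf, if_neg (by omega), List.getD_eq_getElem _ _ hlt]
  exact (Finset.mem_sort _).1 (List.getElem_mem _)

lemma kf_strict (hc : S.card = r) (hpos : ∀ x ∈ S, 1 ≤ x) {i : ℕ} (hi : i < r) :
    kf S i < kf S (i + 1) := by
  have hlen : (S.sort (· ≤ ·)).length = r := by rw [Finset.length_sort, hc]
  rcases Nat.eq_zero_or_pos i with h0 | h0
  · subst h0
    have := hpos _ (kf_mem hc le_rfl (by omega) : kf S 1 ∈ S)
    simp only [kf_zero]; exact this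
  · have h2 : i < (S.sort (· ≤ ·)).length := by omega
    have h1 : i - 1 < (S.sort (· ≤ ·)).length := by omega
    have hsorted := Finset.sortedLT_sort S
    rw [kf, if_neg (by omega), kf, if_neg (by omega),
      List.getD_eq_getElem _ _ h1, List.getD_eq_getElem _ _ (show i + 1 - 1 < _ by omega)]
    show (S.sort (· ≤ ·)).get ⟨i - 1, h1⟩ < (S.sort (· ≤ ·)).get ⟨i + 1 - 1, by omega⟩
    exact hsorted (by simp; omega)

lemma kf_surj (hc : S.card = r) {x : ℕ} (hx : x ∈ S) :
    ∃ i, 1 ≤ i ∧ i ≤ r ∧ kf S i = x := by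
  have hlen : (S.sort (· ≤ ·)).length = r := by rw [Finset.length_sort, hc]
  have hx' : x ∈ S.sort (· ≤ ·) := (Finset.mem_sort _).2 hx
  obtain ⟨t, ht⟩ := List.get_of_mem hx'
  refine ⟨t.1 + 1, by omega, by omega, ?_⟩
  rw [kf, if_neg (by omega), List.getD_eq_getElem _ _ (by omega : t.1 + 1 - 1 < _)]
  simpa using ht

/-- the pair (set of big-gap indices, gap data) from which `S` can be reconstructed. -/
def TH (s' r : ℕ) (S : Finset ℕ) : Σ _ : Finset (Fin r), (Fin r → ℕ) :=
  ⟨Finset.univ.filter (fun i : Fin r => s' ≤ kf S (i + 1) - kf S i),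
   fun i => if s' ≤ kf S (i + 1) - kf S i then kf S (i + 1) else kf S (i + 1) - kf S i⟩

lemma TH_inj {a b : ℕ}
    (hc : S.card = r) (hc' : S'.card = r)
    (hstrict : ∀ i < r, kf S i < kf S (i + 1))
    (hstrict' : ∀ i < r, kf S' i < kf S' (i + 1))
    (heq : TH a r S = TH b r S') : S = S' := by
  rw [TH, TH, Sigma.mk.inj_iff, heq_iff_eq] at heq
  obtain ⟨hT, hg⟩ := heq
  have key : ∀ i, i ≤ r → kf S i = kf S' i := by
    intro i
    induction i with
    | zero => intro _; rw [kf_zero, kf_zero]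
    | succ i ih =>
      intro hi
      have hi' : i < r := by omega
      have hmem : (a ≤ kf S (i + 1) - kf S i) ↔ (b ≤ kf S' (i + 1) - kf S' i) := by
        have h1 := Finset.ext_iff.1 hT ⟨i, hi'⟩
        simpa using h1
      have h2 := congrFun hg ⟨i, hi'⟩
      simp only at h2
      have hik := ih (by omega)
      have hs1 := hstrict i hi'
      have hs2 := hstrict' i hi'
      by_cases hcase : a ≤ kf S (i + 1) - kf S i
      · rw [if_pos hcase, if_pos (hmem.1 hcase)] at h2; exact h2
      · rw [if_neg hcase, if_neg (fun h => hcase (hmem.2 h))] at h2; omega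
  ext x
  constructor
  · intro hx
    obtain ⟨i, h1, h2, h3⟩ := kf_surj hc hx
    rw [← h3, key i h2]; exact kf_mem hc' h1 h2
  · intro hx
    obtain ⟨i, h1, h2, h3⟩ := kf_surj hc' hx
    rw [← h3, ← key i h2]; exact kf_mem hc h1 h2

lemma iInter_kf {Ω : Type*} (E : ℕ → Set Ω) (hc : S.card = r) :
    ⋂ i ∈ Finset.Icc 1 r, E (kf S i) = ⋂ k ∈ S, E k := by
  ext ω
  simp only [Set.mem_iInter, Finset.mem_Icc]
  constructor
  · intro h k hk
    obtain ⟨i, h1, h2, h3⟩ := kf_surj hc hk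
    rw [← h3]; exact h i ⟨h1, h2⟩
  · intro h i hi
    exact h _ (kf_mem hc hi.1 hi.2)

lemma ncard_lt_and (r : ℕ) (P : ℕ → Prop) [DecidablePred P] :
    Set.ncard {i | i < r ∧ P i} = (Finset.univ.filter (fun i : Fin r => P i.val)).card := by
  have h1 : {i | i < r ∧ P i} = ↑((Finset.range r).filter P) := by
    ext i; simp [Finset.mem_filter, Finset.mem_range]
  rw [h1, Set.ncard_coe_finset]
  refine Finset.card_bij (fun i hi => ⟨i, (Finset.mem_range.1 (Finset.mem_filter.1 hi).1)⟩)
    (fun i hi => ?_) (fun i hi i' hi' h => by simpa using congrArg Fin.val h)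
    (fun i hi => ⟨i.val, Finset.mem_filter.2 ⟨Finset.mem_range.2 i.isLt, (Finset.mem_filter.1 hi).2⟩, rfl⟩)
  · simp only [Finset.mem_filter, Finset.mem_univ, true_and]
    exact (Finset.mem_filter.1 hi).2

lemma pow_le_max_one_pow {x : ℝ} (hx : 0 ≤ x) {m r : ℕ} (hmr : m ≤ r) :
    x ^ m ≤ max 1 (x ^ r) := by
  rcases le_total x 1 with h | h
  · exact le_max_of_le_left (pow_le_one₀ hx h)
  · exact le_max_of_le_right (pow_le_pow_right₀ h hmr)


def SS (r j : ℕ) : Finset (Finset ℕ) := (Finset.Icc 1 (2 ^ (j + 1))).powersetCard r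

def lvl (j : ℕ) (S : Finset ℕ) : ℕ := max (2 ^ j) (S.sup id)

noncomputable def Fb (C : ℝ) (σ : ℕ → ℝ) (r j m : ℕ) : ℝ :=
  if m = r then C * σ (2 ^ j) ^ r
  else C * σ (2 ^ j) ^ m / ((j : ℝ) * Real.log 2) ^ (100 * r)

noncomputable def Wc (C : ℝ) (j : ℕ) : ℕ := ⌈C * (((j : ℝ) + 1) * Real.log 2) ^ 2⌉₊

lemma Fb_nonneg {C : ℝ} (hC : 0 < C) {σ : ℕ → ℝ} (hσ : ∀ n, 0 ≤ σ n) (r j m : ℕ) :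
    0 ≤ Fb C σ r j m := by
  rw [Fb]
  split
  · exact mul_nonneg hC.le (pow_nonneg (hσ _) _)
  · apply div_nonneg (mul_nonneg hC.le (pow_nonneg (hσ _) _))
    exact pow_nonneg (mul_nonneg (Nat.cast_nonneg _) (Real.log_nonneg one_le_two)) _

end BC2
namespace BC2
section
variable {C : ℝ} {σ : ℕ → ℝ} {s : ℕ → ℕ} {r j : ℕ}

lemma sum_Fb_le (hC : 0 < C) (hσ : ∀ n, 0 ≤ σ n) (hr : 1 ≤ r) (hj : 1 ≤ j)
    {K : ℝ} (hKj : ((2 : ℝ) ^ j * σ (2 ^ j)) ^ r ≤ K)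
    (hstrictAll : ∀ S ∈ SS r j, ∀ i < r, kf S i < kf S (i + 1))
    (hW : ∀ S ∈ SS r j, ∀ i : Fin r, (TH (s (lvl j S)) r S).2 i ∈
      if i ∈ (TH (s (lvl j S)) r S).1 then Finset.Icc 1 (2 ^ (j + 1))
      else Finset.Icc 1 (Wc C j)) :
    ∑ S ∈ SS r j, Fb C σ r j ((TH (s (lvl j S)) r S).1.card) ≤
      C * ((2 : ℝ) ^ (j + 1)) ^ r * σ (2 ^ j) ^ r +
        2 ^ r * (C * (2 ^ r * max 1 K) * (max 1 ((Wc C j : ℝ))) ^ r /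
          ((j : ℝ) * Real.log 2) ^ (100 * r)) := by
  classical
  set W := Wc C j with hWdef
  set P : Finset (Σ _ : Finset (Fin r), (Fin r → ℕ)) :=
    Finset.univ.sigma (fun T => Fintype.piFinset
      (fun i => if i ∈ T then Finset.Icc 1 (2 ^ (j + 1)) else Finset.Icc 1 W)) with hP
  have hcards : ∀ S ∈ SS r j, S.card = r := by
    intro S hS; exact (Finset.mem_powersetCard.1 hS).2
  have hinj : ∀ S ∈ SS r j, ∀ S' ∈ SS r j,
      TH (s (lvl j S)) r S = TH (s (lvl j S')) r S' → S = S' := by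
    intro S hS S' hS' heq
    exact TH_inj (hcards S hS) (hcards S' hS') (hstrictAll S hS) (hstrictAll S' hS') heq
  have himg : ∀ S ∈ SS r j, TH (s (lvl j S)) r S ∈ P := by
    intro S hS
    rw [hP, Finset.mem_sigma]
    exact ⟨Finset.mem_univ _, Fintype.mem_piFinset.2 (hW S hS)⟩
  have hL0 : (0 : ℝ) ≤ ((j : ℝ) * Real.log 2) ^ (100 * r) :=
    pow_nonneg (mul_nonneg (Nat.cast_nonneg _) (Real.log_nonneg one_le_two)) _
  calc
    ∑ S ∈ SS r j, Fb C σ r j ((TH (s (lvl j S)) r S).1.card)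
        = ∑ p ∈ (SS r j).image (fun S => TH (s (lvl j S)) r S), Fb C σ r j p.1.card :=
      (Finset.sum_image (f := fun p : (Σ _ : Finset (Fin r), (Fin r → ℕ)) => Fb C σ r j p.1.card)
        (fun x hx y hy h => hinj x hx y hy h)).symm
    _ ≤ ∑ p ∈ P, Fb C σ r j p.1.card := by
      apply Finset.sum_le_sum_of_subset_of_nonneg
      · intro p hp
        obtain ⟨S, hS, rfl⟩ := Finset.mem_image.1 hp
        exact himg S hS
      · intro p _ _; exact Fb_nonneg hC hσ _ _ _
    _ = ∑ T : Finset (Fin r),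
          (((2 ^ (j + 1) : ℕ) ^ T.card * W ^ (r - T.card) : ℕ) : ℝ) * Fb C σ r j T.card := by
      rw [hP, Finset.sum_sigma]
      apply Finset.sum_congr rfl
      intro T _
      have hdeq : ∑ g ∈ Fintype.piFinset
            (fun i => if i ∈ T then Finset.Icc 1 (2 ^ (j + 1)) else Finset.Icc 1 W),
          Fb C σ r j (⟨T, g⟩ : Σ _ : Finset (Fin r), (Fin r → ℕ)).fst.card
          = ∑ _g ∈ Fintype.piFinset
            (fun i => if i ∈ T then Finset.Icc 1 (2 ^ (j + 1)) else Finset.Icc 1 W),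
          Fb C σ r j T.card := rfl
      rw [hdeq, Finset.sum_const, Fintype.card_piFinset]
      have hprod : (∏ i : Fin r, (if i ∈ T then Finset.Icc 1 (2 ^ (j + 1)) else Finset.Icc 1 W).card)
          = (2 ^ (j + 1)) ^ T.card * W ^ (r - T.card) := by
        have : ∀ i : Fin r, (if i ∈ T then Finset.Icc 1 (2 ^ (j + 1)) else Finset.Icc 1 W).card
            = if i ∈ T then 2 ^ (j + 1) else W := by
          intro i; split <;> simp [Nat.card_Icc]
        rw [Finset.prod_congr rfl (fun i _ => this i), Finset.prod_ite,
          Finset.prod_const, Finset.prod_const]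
        congr 2
        · simp
        · rw [show (Finset.filter (fun x => x ∉ T) Finset.univ) = Tᶜ from by ext i; simp,
            Finset.card_compl, Fintype.card_fin]
      rw [hprod, nsmul_eq_mul]
    _ ≤ _ := by
      rw [← Finset.add_sum_erase _ _ (Finset.mem_univ (Finset.univ : Finset (Fin r)))]
      apply add_le_add
      · -- T = univ term
        have hcard : (Finset.univ : Finset (Fin r)).card = r := by simp
        rw [Fb, if_pos hcard, hcard, Nat.sub_self, pow_zero, mul_one]
        rw [mul_comm C, ← mul_assoc]
        apply le_of_eq
        push_cast
        ring
      · -- other terms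
        set tailterm : ℝ := C * (2 ^ r * max 1 K) * (max 1 ((W : ℝ))) ^ r /
          ((j : ℝ) * Real.log 2) ^ (100 * r) with htt
        have htt0 : 0 ≤ tailterm := by
          apply div_nonneg _ hL0
          apply mul_nonneg (mul_nonneg hC.le _) (pow_nonneg (le_trans zero_le_one (le_max_left _ _)) _)
          exact mul_nonneg (by positivity) (le_trans zero_le_one (le_max_left _ _))
        have hbound : ∀ T ∈ (Finset.univ : Finset (Finset (Fin r))).erase Finset.univ,
            (((2 ^ (j + 1) : ℕ) ^ T.card * W ^ (r - T.card) : ℕ) : ℝ) * Fb C σ r j T.card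
              ≤ tailterm := by
          intro T hT
          have hTne : T ≠ Finset.univ := (Finset.mem_erase.1 hT).1
          have hm : T.card < r := by
            have h1 : T.card ≤ r := by simpa using Finset.card_le_univ T
            rcases lt_or_eq_of_le h1 with h | h
            · exact h
            · exact absurd (Finset.eq_univ_of_card T (by simpa using h)) hTne
          set m := T.card with hmdef
          rw [Fb, if_neg (Nat.ne_of_lt hm)]
          have hj0 : (0 : ℝ) < (j : ℝ) := by exact_mod_cast hj
          have hL : (0 : ℝ) < ((j : ℝ) * Real.log 2) ^ (100 * r) :=
            pow_pos (mul_pos hj0 (Real.log_pos one_lt_two)) _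
          rw [htt]
          rw [show (((2 ^ (j + 1) : ℕ) ^ m * W ^ (r - m) : ℕ) : ℝ) *
              (C * σ (2 ^ j) ^ m / ((j : ℝ) * Real.log 2) ^ (100 * r))
            = (((2 ^ (j + 1) : ℕ) ^ m * W ^ (r - m) : ℕ) : ℝ) * (C * σ (2 ^ j) ^ m) /
              ((j : ℝ) * Real.log 2) ^ (100 * r) from by ring]
          rw [div_le_div_iff_of_pos_right hL]
          have key : (((2 ^ (j + 1) : ℕ) ^ m * W ^ (r - m) : ℕ) : ℝ) * (C * σ (2 ^ j) ^ m)
              = C * (((2 : ℝ) ^ (j + 1) * σ (2 ^ j)) ^ m * ((W : ℝ)) ^ (r - m)) := by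
            push_cast
            ring
          rw [key, mul_assoc]
          apply mul_le_mul_of_nonneg_left _ hC.le
          apply mul_le_mul
          · -- (2^{j+1} σ)^m ≤ 2^r * max 1 K
            have h1 : ((2 : ℝ) ^ (j + 1) * σ (2 ^ j)) ^ m
                = 2 ^ m * ((2 : ℝ) ^ j * σ (2 ^ j)) ^ m := by ring
            rw [h1]
            apply mul_le_mul
            · exact pow_le_pow_right₀ one_le_two hm.le
            · calc ((2 : ℝ) ^ j * σ (2 ^ j)) ^ m
                  ≤ max 1 (((2 : ℝ) ^ j * σ (2 ^ j)) ^ r) :=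
                    pow_le_max_one_pow (mul_nonneg (by positivity) (hσ _)) hm.le
                _ ≤ max 1 K := max_le_max le_rfl hKj
            · exact pow_nonneg (mul_nonneg (by positivity) (hσ _)) _
            · positivity
          · -- W^{r-m} ≤ maxW^r
            calc ((W : ℝ)) ^ (r - m) ≤ (max 1 ((W : ℝ))) ^ (r - m) :=
                  pow_le_pow_left₀ (Nat.cast_nonneg _) (le_max_right _ _) _
              _ ≤ (max 1 ((W : ℝ))) ^ r :=
                  pow_le_pow_right₀ (le_max_left _ _) (Nat.sub_le _ _)
          · exact pow_nonneg (Nat.cast_nonneg _) _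
          · positivity
        calc ∑ T ∈ (Finset.univ : Finset (Finset (Fin r))).erase Finset.univ,
              (((2 ^ (j + 1) : ℕ) ^ T.card * W ^ (r - T.card) : ℕ) : ℝ) * Fb C σ r j T.card
            ≤ ((Finset.univ : Finset (Finset (Fin r))).erase Finset.univ).card • tailterm :=
              Finset.sum_le_card_nsmul _ _ _ hbound
          _ ≤ 2 ^ r * tailterm := by
              rw [nsmul_eq_mul]
              apply mul_le_mul_of_nonneg_right _ htt0
              calc (((Finset.univ : Finset (Finset (Fin r))).erase Finset.univ).card : ℝ)
                  ≤ ((Finset.univ : Finset (Finset (Fin r))).card : ℝ) := by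
                    exact_mod_cast Finset.card_le_card (Finset.erase_subset _ _)
                _ = 2 ^ r := by simp [Fintype.card_finset]
  -- done

end
end BC2
end


open MeasureTheory Filter

/-- Convergent half of the generalized multiple Borel–Cantelli Lemma. -/
theorem stmt2 {Ω : Type*} [MeasurableSpace Ω] (μ : Measure Ω) [IsProbabilityMeasure μ]
    (E : ℕ → ℕ → Set Ω) (hmeas : ∀ n k, MeasurableSet (E n k))
    (hEmono : ∀ k n₁ n₂, n₂ ≤ n₁ → E n₁ k ⊆ E n₂ k)
    (r : ℕ) (hr : 1 ≤ r)
    (C : ℝ) (hC : 0 < C)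
    (σ : ℕ → ℝ) (hσnonneg : ∀ n, 0 ≤ σ n)
    (hσmono : ∀ n₁ n₂, n₂ ≤ n₁ → σ n₁ ≤ σ n₂)
    (s : ℕ → ℕ) (hs : ∀ n, 2 ≤ n → (s n : ℝ) ≤ C * (Real.log n) ^ 2)
    -- (GM1)_r : well-separated tuples
    (hGM1 : ∀ n, ∀ k : ℕ → ℕ, k 0 = 0 → (∀ j < r, k j < k (j + 1)) → k r ≤ n →
      (∀ j < r, s n ≤ k (j + 1) - k j) →
      C⁻¹ * σ n ^ r ≤ (μ (⋂ j ∈ Finset.Icc 1 r, E n (k j))).toReal ∧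
        (μ (⋂ j ∈ Finset.Icc 1 r, E n (k j))).toReal ≤ C * σ n ^ r)
    -- (GM2)_r : tuples with only m < r large gaps
    (hGM2 : ∀ n, ∀ k : ℕ → ℕ, k 0 = 0 → (∀ j < r, k j < k (j + 1)) → k r ≤ n →
      ∀ m < r, Set.ncard {j | j < r ∧ s n ≤ k (j + 1) - k j} = m →
      (μ (⋂ j ∈ Finset.Icc 1 r, E n (k j))).toReal ≤
        C * σ n ^ m / (Real.log n) ^ (100 * r))
    (hsum : Summable (fun j : ℕ => (2 : ℝ) ^ (r * j) * σ (2 ^ j) ^ r)) :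
    μ (⋂ m, ⋃ n, ⋃ (_ : m ≤ n),
        {ω | r ≤ Set.ncard {k | 1 ≤ k ∧ k ≤ n ∧ ω ∈ E n k}}) = 0 := by
  
  classical
  -- the constant K bounding the dyadic terms
  set K : ℝ := ∑' j : ℕ, (2 : ℝ) ^ (r * j) * σ (2 ^ j) ^ r with hKdef
  have hterm_nonneg : ∀ j : ℕ, 0 ≤ (2 : ℝ) ^ (r * j) * σ (2 ^ j) ^ r :=
    fun j => mul_nonneg (by positivity) (pow_nonneg (hσnonneg _) _)
  have hK : ∀ j : ℕ, ((2 : ℝ) ^ j * σ (2 ^ j)) ^ r ≤ K := by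
    intro j
    have h1 : ((2 : ℝ) ^ j * σ (2 ^ j)) ^ r = (2 : ℝ) ^ (r * j) * σ (2 ^ j) ^ r := by
      rw [mul_pow, ← pow_mul, Nat.mul_comm]
    rw [h1]
    exact hsum.le_tsum j (fun i _ => hterm_nonneg i)
  -- the dyadic covering sets
  set B : ℕ → Set Ω := fun j => ⋃ S ∈ BC2.SS r j, ⋂ k ∈ S, E (BC2.lvl j S) k with hBdef
  -- basic facts about tuples
  have hSfacts : ∀ j : ℕ, ∀ S ∈ BC2.SS r j, S.card = r ∧ S ⊆ Finset.Icc 1 (2 ^ (j + 1)) := by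
    intro j S hS
    rw [BC2.SS, Finset.mem_powersetCard] at hS
    exact ⟨hS.2, hS.1⟩
  have hstrictAll : ∀ j : ℕ, ∀ S ∈ BC2.SS r j, ∀ i < r, BC2.kf S i < BC2.kf S (i + 1) := by
    intro j S hS i hi
    obtain ⟨hc, hsub⟩ := hSfacts j S hS
    exact BC2.kf_strict hc (fun x hx => (Finset.mem_Icc.1 (hsub hx)).1) hi
  have hlvl_ge : ∀ j : ℕ, ∀ S : Finset ℕ, 2 ^ j ≤ BC2.lvl j S := fun j S => le_max_left _ _
  have hlvl_le : ∀ j : ℕ, ∀ S ∈ BC2.SS r j, BC2.lvl j S ≤ 2 ^ (j + 1) := by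
    intro j S hS
    obtain ⟨hc, hsub⟩ := hSfacts j S hS
    apply max_le (Nat.pow_le_pow_right (by norm_num) (Nat.le_succ j))
    exact Finset.sup_le fun x hx => (Finset.mem_Icc.1 (hsub hx)).2
  have hlvl2 : ∀ j : ℕ, 1 ≤ j → ∀ S : Finset ℕ, 2 ≤ BC2.lvl j S := by
    intro j hj S
    calc (2 : ℕ) = 2 ^ 1 := by norm_num
      _ ≤ 2 ^ j := Nat.pow_le_pow_right (by norm_num) hj
      _ ≤ _ := hlvl_ge j S
  have hkr : ∀ j : ℕ, ∀ S ∈ BC2.SS r j, BC2.kf S r ≤ BC2.lvl j S := by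
    intro j S hS
    obtain ⟨hc, hsub⟩ := hSfacts j S hS
    have h1 : BC2.kf S r ∈ S := BC2.kf_mem hc hr le_rfl
    exact le_trans (Finset.le_sup (f := id) h1) (le_max_right _ _)
  -- bound on the separation threshold at level `lvl j S`
  have hsep : ∀ j : ℕ, 1 ≤ j → ∀ S ∈ BC2.SS r j, s (BC2.lvl j S) ≤ BC2.Wc C j := by
    intro j hj S hS
    have h2 : 2 ≤ BC2.lvl j S := hlvl2 j hj S
    have hle : BC2.lvl j S ≤ 2 ^ (j + 1) := hlvl_le j S hS
    have hlog : Real.log (BC2.lvl j S) ≤ ((j : ℝ) + 1) * Real.log 2 := by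
      calc Real.log (BC2.lvl j S) ≤ Real.log ((2 : ℝ) ^ (j + 1)) := by
            apply Real.log_le_log (by exact_mod_cast Nat.lt_of_lt_of_le Nat.zero_lt_two h2)
            exact_mod_cast hle
        _ = ((j : ℝ) + 1) * Real.log 2 := by rw [Real.log_pow]; push_cast; ring
    have hlognn : 0 ≤ Real.log (BC2.lvl j S) :=
      Real.log_nonneg (by exact_mod_cast le_trans (by norm_num : (1:ℕ) ≤ 2) h2)
    have hcast : (s (BC2.lvl j S) : ℝ) ≤ (BC2.Wc C j : ℝ) := by
      calc (s (BC2.lvl j S) : ℝ) ≤ C * (Real.log (BC2.lvl j S)) ^ 2 := hs _ h2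
        _ ≤ C * (((j : ℝ) + 1) * Real.log 2) ^ 2 :=
            mul_le_mul_of_nonneg_left (pow_le_pow_left₀ hlognn hlog 2) hC.le
        _ ≤ (BC2.Wc C j : ℝ) := Nat.le_ceil _
    exact_mod_cast hcast
  -- the membership data for the counting lemma
  have hW : ∀ j : ℕ, 1 ≤ j → ∀ S ∈ BC2.SS r j, ∀ i : Fin r,
      (BC2.TH (s (BC2.lvl j S)) r S).2 i ∈
        (if i ∈ (BC2.TH (s (BC2.lvl j S)) r S).1 then Finset.Icc 1 (2 ^ (j + 1))
          else Finset.Icc 1 (BC2.Wc C j)) := by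
    intro j hj S hS i
    obtain ⟨hc, hsub⟩ := hSfacts j S hS
    have hstrict := hstrictAll j S hS i.val i.isLt
    by_cases hcase : s (BC2.lvl j S) ≤ BC2.kf S (i.val + 1) - BC2.kf S i.val
    · have hmem : i ∈ (BC2.TH (s (BC2.lvl j S)) r S).1 := by
        rw [BC2.TH]; exact Finset.mem_filter.2 ⟨Finset.mem_univ _, hcase⟩
      rw [if_pos hmem]
      have hval : (BC2.TH (s (BC2.lvl j S)) r S).2 i = BC2.kf S (i.val + 1) := by
        rw [BC2.TH]; exact if_pos hcase
      rw [hval]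
      exact hsub (BC2.kf_mem hc (by omega) (by omega : i.val + 1 ≤ r))
    · have hmem : i ∉ (BC2.TH (s (BC2.lvl j S)) r S).1 := by
        rw [BC2.TH]
        simp only [Finset.mem_filter, Finset.mem_univ, true_and]
        exact hcase
      rw [if_neg hmem]
      have hval : (BC2.TH (s (BC2.lvl j S)) r S).2 i
          = BC2.kf S (i.val + 1) - BC2.kf S i.val := by
        rw [BC2.TH]; exact if_neg hcase
      rw [hval, Finset.mem_Icc]
      constructor
      · omega
      · have := hsep j hj S hS
        omega
  -- the per-tuple measure bound
  have hperS : ∀ j : ℕ, 1 ≤ j → ∀ S ∈ BC2.SS r j,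
      (μ (⋂ k ∈ S, E (BC2.lvl j S) k)).toReal ≤
        BC2.Fb C σ r j ((BC2.TH (s (BC2.lvl j S)) r S).1.card) := by
    intro j hj S hS
    obtain ⟨hc, hsub⟩ := hSfacts j S hS
    set n' := BC2.lvl j S with hn'
    have hstrict : ∀ i < r, BC2.kf S i < BC2.kf S (i + 1) := hstrictAll j S hS
    have hinter : ⋂ i ∈ Finset.Icc 1 r, E n' (BC2.kf S i) = ⋂ k ∈ S, E n' k :=
      BC2.iInter_kf (E n') hc
    have hσle : σ n' ≤ σ (2 ^ j) := hσmono n' (2 ^ j) (hlvl_ge j S)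
    have hTle : ((BC2.TH (s n') r S).1).card ≤ r := by
      calc ((BC2.TH (s n') r S).1).card ≤ (Finset.univ : Finset (Fin r)).card :=
            Finset.card_le_univ _
        _ = r := by simp
    rcases eq_or_lt_of_le hTle with heqr | hltr
    · -- all gaps are large : use (GM1)
      have hTuniv : (BC2.TH (s n') r S).1 = Finset.univ :=
        Finset.eq_univ_of_card _ (by simpa using heqr)
      have hbig : ∀ i < r, s n' ≤ BC2.kf S (i + 1) - BC2.kf S i := by
        intro i hi
        have hmem : (⟨i, hi⟩ : Fin r) ∈ (BC2.TH (s n') r S).1 := by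
          rw [hTuniv]; exact Finset.mem_univ _
        rw [BC2.TH] at hmem
        simpa using (Finset.mem_filter.1 hmem).2
      have hGM := (hGM1 n' (BC2.kf S) (BC2.kf_zero S) hstrict (hkr j S hS) hbig).2
      rw [hinter] at hGM
      rw [BC2.Fb, if_pos heqr]
      calc (μ (⋂ k ∈ S, E n' k)).toReal ≤ C * σ n' ^ r := hGM
        _ ≤ C * σ (2 ^ j) ^ r :=
            mul_le_mul_of_nonneg_left (pow_le_pow_left₀ (hσnonneg _) hσle r) hC.le
    · -- some gaps are small : use (GM2)
      set m := ((BC2.TH (s n') r S).1).card with hmdef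
      have hncard : Set.ncard {i | i < r ∧ s n' ≤ BC2.kf S (i + 1) - BC2.kf S i} = m := by
        rw [BC2.ncard_lt_and r (fun i => s n' ≤ BC2.kf S (i + 1) - BC2.kf S i), hmdef]
        rfl
      have hGM := hGM2 n' (BC2.kf S) (BC2.kf_zero S) hstrict (hkr j S hS) m hltr hncard
      rw [hinter] at hGM
      rw [BC2.Fb, if_neg (Nat.ne_of_lt hltr)]
      refine le_trans hGM ?_
      have hj0 : (0 : ℝ) < (j : ℝ) := by exact_mod_cast hj
      have hlogn' : ((j : ℝ) * Real.log 2) ≤ Real.log n' := by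
        calc (j : ℝ) * Real.log 2 = Real.log ((2 : ℝ) ^ j) := by rw [Real.log_pow]
          _ ≤ Real.log n' := by
              apply Real.log_le_log (by positivity)
              exact_mod_cast hlvl_ge j S
      apply div_le_div₀ (mul_nonneg hC.le (pow_nonneg (hσnonneg _) _))
      · exact mul_le_mul_of_nonneg_left (pow_le_pow_left₀ (hσnonneg _) hσle m) hC.le
      · exact pow_pos (mul_pos hj0 (Real.log_pos one_lt_two)) _
      · exact pow_le_pow_left₀ (mul_nonneg hj0.le (Real.log_nonneg one_le_two)) hlogn' _
  -- the per-scale measure bound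
  set c : ℕ → ℝ := fun j =>
    C * ((2 : ℝ) ^ (j + 1)) ^ r * σ (2 ^ j) ^ r +
      2 ^ r * (C * (2 ^ r * max 1 K) * (max 1 ((BC2.Wc C j : ℝ))) ^ r /
        ((j : ℝ) * Real.log 2) ^ (100 * r)) with hcdef
  have hc_nonneg : ∀ j : ℕ, 0 ≤ c j := by
    intro j
    apply add_nonneg
    · exact mul_nonneg (mul_nonneg hC.le (by positivity)) (pow_nonneg (hσnonneg _) _)
    · apply mul_nonneg (by positivity)
      apply div_nonneg
      · apply mul_nonneg (mul_nonneg hC.le _) (pow_nonneg (le_trans zero_le_one (le_max_left _ _)) _)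
        exact mul_nonneg (by positivity) (le_trans zero_le_one (le_max_left _ _))
      · exact pow_nonneg (mul_nonneg (Nat.cast_nonneg _) (Real.log_nonneg one_le_two)) _
  have hBj : ∀ j : ℕ, 1 ≤ j → μ (B j) ≤ ENNReal.ofReal (c j) := by
    intro j hj
    calc μ (B j) ≤ ∑ S ∈ BC2.SS r j, μ (⋂ k ∈ S, E (BC2.lvl j S) k) := by
          rw [hBdef]
          exact measure_biUnion_finset_le _ _
      _ ≤ ∑ S ∈ BC2.SS r j,
            ENNReal.ofReal (BC2.Fb C σ r j ((BC2.TH (s (BC2.lvl j S)) r S).1.card)) := by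
          apply Finset.sum_le_sum
          intro S hS
          rw [ENNReal.le_ofReal_iff_toReal_le (measure_ne_top μ _)
            (BC2.Fb_nonneg hC hσnonneg _ _ _)]
          exact hperS j hj S hS
      _ = ENNReal.ofReal
            (∑ S ∈ BC2.SS r j, BC2.Fb C σ r j ((BC2.TH (s (BC2.lvl j S)) r S).1.card)) :=
          (ENNReal.ofReal_sum_of_nonneg (fun S _ => BC2.Fb_nonneg hC hσnonneg _ _ _)).symm
      _ ≤ ENNReal.ofReal (c j) := by
          apply ENNReal.ofReal_le_ofReal
          rw [hcdef]
          exact BC2.sum_Fb_le hC hσnonneg hr hj (hK j) (hstrictAll j) (fun S hS => hW j hj S hS)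
  -- summability of the bounds
  set d : ℕ → ℝ := fun j => if j = 0 then 1 else c j with hddef
  have hd_nonneg : ∀ j : ℕ, 0 ≤ d j := by
    intro j
    simp only [hddef]
    split
    · exact zero_le_one
    · exact hc_nonneg j
  have hlog2pos : (0 : ℝ) < Real.log 2 := Real.log_pos one_lt_two
  have hlog2le : Real.log 2 ≤ 1 := by
    have := Real.add_one_le_exp (Real.log 2)
    nlinarith [Real.exp_log (show (0:ℝ) < 2 by norm_num), Real.exp_one_gt_d9]
  have hdsum : Summable d := by
    rw [← summable_nat_add_iff 1]
    have heq : (fun n : ℕ => d (n + 1)) = fun n : ℕ => c (n + 1) := by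
      funext n; rw [hddef]; simp
    rw [heq]
    apply Summable.add
    · -- main part
      have base : Summable (fun n : ℕ => C * 2 ^ r * ((2 : ℝ) ^ (r * n) * σ (2 ^ n) ^ r)) :=
        hsum.mul_left _
      have shift : Summable (fun n : ℕ =>
          C * 2 ^ r * ((2 : ℝ) ^ (r * (n + 1)) * σ (2 ^ (n + 1)) ^ r)) :=
        (summable_nat_add_iff 1).2 base
      apply shift.congr
      intro n
      rw [show ((2 : ℝ) ^ (n + 1 + 1)) ^ r = 2 ^ r * (2 : ℝ) ^ (r * (n + 1)) from by
        rw [← pow_mul, ← pow_add]; congr 1; ring]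
      ring
    · -- tail part
      set A : ℝ := C * (2 ^ r * max 1 K) with hA
      have hA0 : 0 ≤ A := by
        rw [hA]
        exact mul_nonneg hC.le (mul_nonneg (by positivity) (le_trans zero_le_one (le_max_left _ _)))
      set D : ℝ := 2 ^ r * (A * (4 * C + 1) ^ r / (Real.log 2) ^ (100 * r)) with hD
      have hD0 : 0 ≤ D := by
        rw [hD]
        apply mul_nonneg (by positivity)
        apply div_nonneg (mul_nonneg hA0 (by positivity)) (by positivity)
      have hle : ∀ n : ℕ,
          2 ^ r * (A * (max 1 ((BC2.Wc C (n + 1) : ℝ))) ^ r /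
            (((n + 1 : ℕ) : ℝ) * Real.log 2) ^ (100 * r))
          ≤ D * (1 / ((n + 1 : ℕ) : ℝ) ^ 2) := by
        intro n
        set j : ℕ := n + 1 with hjdef
        have hj1 : (1 : ℝ) ≤ (j : ℝ) := by exact_mod_cast Nat.one_le_iff_ne_zero.2 (by omega)
        have hj0 : (0 : ℝ) < (j : ℝ) := lt_of_lt_of_le zero_lt_one hj1
        -- numerator bound
        have hWle : max 1 ((BC2.Wc C j : ℝ)) ≤ (4 * C + 1) * (j : ℝ) ^ 2 := by
          have h1 : ((BC2.Wc C j : ℝ)) < C * (((j : ℝ) + 1) * Real.log 2) ^ 2 + 1 :=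
            Nat.ceil_lt_add_one (by positivity)
          have h2 : (((j : ℝ) + 1) * Real.log 2) ^ 2 ≤ 4 * (j : ℝ) ^ 2 := by
            have h3 : 0 ≤ ((j : ℝ) + 1) * Real.log 2 := by positivity
            have h4 : ((j : ℝ) + 1) * Real.log 2 ≤ 2 * (j : ℝ) := by nlinarith
            nlinarith
          have h5 : (1 : ℝ) ≤ (4 * C + 1) * (j : ℝ) ^ 2 := by nlinarith
          apply max_le h5
          nlinarith
        have hnum : (max 1 ((BC2.Wc C j : ℝ))) ^ r ≤ (4 * C + 1) ^ r * ((j : ℝ) ^ 2) ^ r := by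
          rw [← mul_pow]
          exact pow_le_pow_left₀ (le_trans zero_le_one (le_max_left _ _)) hWle r
        -- denominator
        have hden : (((j : ℕ) : ℝ) * Real.log 2) ^ (100 * r)
            = ((j : ℝ)) ^ (100 * r) * (Real.log 2) ^ (100 * r) := mul_pow _ _ _
        have hpow : ((j : ℝ) ^ 2) ^ r * (j : ℝ) ^ 2 ≤ (j : ℝ) ^ (100 * r) := by
          rw [← pow_mul, ← pow_add]
          exact pow_le_pow_right₀ hj1 (by omega)
        -- put together
        have hX' : A * (max 1 ((BC2.Wc C j : ℝ))) ^ r /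
              ((j : ℝ) ^ (100 * r) * (Real.log 2) ^ (100 * r))
            ≤ A * ((4 * C + 1) ^ r * (((j : ℝ) ^ 2) ^ r)) /
              ((j : ℝ) ^ (100 * r) * (Real.log 2) ^ (100 * r)) := by
          rw [div_le_div_iff_of_pos_right (by positivity)]
          rw [show (4 * C + 1) ^ r * (((j : ℝ) ^ 2) ^ r)
              = (4 * C + 1) ^ r * ((j : ℝ) ^ 2) ^ r from rfl]
          exact mul_le_mul_of_nonneg_left hnum hA0
        have hXY : A * ((4 * C + 1) ^ r * (((j : ℝ) ^ 2) ^ r)) /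
              ((j : ℝ) ^ (100 * r) * (Real.log 2) ^ (100 * r))
            ≤ A * (4 * C + 1) ^ r / ((Real.log 2) ^ (100 * r) * (j : ℝ) ^ 2) := by
          rw [div_le_div_iff₀ (by positivity) (by positivity)]
          calc A * ((4 * C + 1) ^ r * (((j : ℝ) ^ 2) ^ r)) *
                ((Real.log 2) ^ (100 * r) * (j : ℝ) ^ 2)
              = (A * (4 * C + 1) ^ r * (Real.log 2) ^ (100 * r)) *
                (((j : ℝ) ^ 2) ^ r * (j : ℝ) ^ 2) := by ring
            _ ≤ (A * (4 * C + 1) ^ r * (Real.log 2) ^ (100 * r)) * (j : ℝ) ^ (100 * r) := by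
                apply mul_le_mul_of_nonneg_left hpow
                exact mul_nonneg (mul_nonneg hA0 (by positivity)) (by positivity)
            _ = A * (4 * C + 1) ^ r * ((j : ℝ) ^ (100 * r) * (Real.log 2) ^ (100 * r)) := by
                ring
        calc 2 ^ r * (A * (max 1 ((BC2.Wc C j : ℝ))) ^ r /
              (((j : ℕ) : ℝ) * Real.log 2) ^ (100 * r))
            = 2 ^ r * (A * (max 1 ((BC2.Wc C j : ℝ))) ^ r /
              ((j : ℝ) ^ (100 * r) * (Real.log 2) ^ (100 * r))) := by rw [hden]
          _ ≤ 2 ^ r * (A * ((4 * C + 1) ^ r * (((j : ℝ) ^ 2) ^ r)) /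
              ((j : ℝ) ^ (100 * r) * (Real.log 2) ^ (100 * r))) :=
              mul_le_mul_of_nonneg_left hX' (by positivity)
          _ ≤ 2 ^ r * (A * (4 * C + 1) ^ r / ((Real.log 2) ^ (100 * r) * (j : ℝ) ^ 2)) :=
              mul_le_mul_of_nonneg_left hXY (by positivity)
          _ = D * (1 / ((j : ℕ) : ℝ) ^ 2) := by
              rw [hD]
              have hlogne : (Real.log 2) ^ (100 * r) ≠ 0 := by positivity
              have hjne : ((j : ℕ) : ℝ) ≠ 0 := by positivity
              field_simp
      have hsum2 : Summable (fun n : ℕ => D * (1 / ((n + 1 : ℕ) : ℝ) ^ 2)) := by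
        apply Summable.mul_left
        exact (summable_nat_add_iff 1).2 (Real.summable_one_div_nat_pow.2 one_lt_two)
      apply Summable.of_nonneg_of_le _ hle hsum2
      intro n
      apply mul_nonneg (by positivity)
      apply div_nonneg (mul_nonneg hA0 (pow_nonneg (le_trans zero_le_one (le_max_left _ _)) _))
      exact pow_nonneg (mul_nonneg (Nat.cast_nonneg _) hlog2pos.le) _
  -- total measure bound
  have hBd : ∀ j : ℕ, μ (B j) ≤ ENNReal.ofReal (d j) := by
    intro j
    rcases Nat.eq_zero_or_pos j with h0 | h1
    · subst h0
      simp only [hddef, if_pos rfl, ENNReal.ofReal_one]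
      exact prob_le_one
    · have : d j = c j := by simp only [hddef]; rw [if_neg (by omega)]
      rw [this]
      exact hBj j h1
  have htsum : ∑' j, μ (B j) ≠ ⊤ := by
    have h1 : ∑' j, μ (B j) ≤ ∑' j, ENNReal.ofReal (d j) :=
      ENNReal.tsum_le_tsum hBd
    have h2 : ∑' j, ENNReal.ofReal (d j) = ENNReal.ofReal (∑' j, d j) :=
      (ENNReal.ofReal_tsum_of_nonneg hd_nonneg hdsum).symm
    rw [h2] at h1
    exact ne_top_of_le_ne_top ENNReal.ofReal_ne_top h1
  -- inclusion into the limsup of the dyadic covering sets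
  have hincl : (⋂ m, ⋃ n, ⋃ (_ : m ≤ n),
        {ω | r ≤ Set.ncard {k | 1 ≤ k ∧ k ≤ n ∧ ω ∈ E n k}}) ⊆ limsup B atTop := by
    intro ω hω
    rw [limsup_eq_iInf_iSup_of_nat]
    simp only [Set.iInf_eq_iInter, Set.iSup_eq_iUnion, Set.mem_iInter, Set.mem_iUnion]
    intro J
    simp only [Set.mem_iInter, Set.mem_iUnion, Set.mem_setOf_eq] at hω
    obtain ⟨n, hn, hcard⟩ := hω (2 ^ J)
    have hn0 : n ≠ 0 := by
      have : (1 : ℕ) ≤ 2 ^ J := Nat.one_le_two_pow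
      omega
    set j : ℕ := Nat.log 2 n with hjdef
    have hJj : J ≤ j := (Nat.le_log_iff_pow_le one_lt_two hn0).2 hn
    have h2j : 2 ^ j ≤ n := Nat.pow_log_le_self 2 hn0
    have hlt : n < 2 ^ (j + 1) := Nat.lt_pow_succ_log_self one_lt_two n
    refine ⟨j, hJj, ?_⟩
    -- extract an r-element subset
    set Kset : Set ℕ := {k | 1 ≤ k ∧ k ≤ n ∧ ω ∈ E n k} with hKset
    have hKfin : Kset.Finite := by
      apply (Set.finite_Icc 1 n).subset
      intro x hx
      exact Set.mem_Icc.2 ⟨hx.1, hx.2.1⟩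
    have hrK : r ≤ hKfin.toFinset.card := by
      rwa [← Set.ncard_eq_toFinset_card Kset hKfin]
    obtain ⟨S, hSsub, hScard⟩ := Finset.exists_subset_card_eq hrK
    have hSK : ∀ x ∈ S, x ∈ Kset := fun x hx => (Set.Finite.mem_toFinset hKfin).1 (hSsub hx)
    have hSmem : S ∈ BC2.SS r j := by
      rw [BC2.SS, Finset.mem_powersetCard]
      refine ⟨fun x hx => ?_, hScard⟩
      have := hSK x hx
      exact Finset.mem_Icc.2 ⟨this.1, le_trans this.2.1 hlt.le⟩
    have hlvln : BC2.lvl j S ≤ n := by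
      apply max_le h2j
      exact Finset.sup_le fun x hx => (hSK x hx).2.1
    rw [hBdef]
    apply Set.mem_iUnion₂.2
    refine ⟨S, hSmem, ?_⟩
    apply Set.mem_iInter₂.2
    intro k hk
    exact hEmono k n (BC2.lvl j S) hlvln (hSK k hk).2.2
  have h0 : μ (limsup B atTop) = 0 := measure_limsup_atTop_eq_zero htsum
  exact le_antisymm (le_trans (measure_mono hincl) h0.le) zero_le
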